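/- Fix A, k, σ, γ, η, c > 0, an integer q̄ ≥ 1 and T > 0. Set C₁ := kγησ/(2(γ+η)), C₀ := A·(ση/k)·(1+σγ/k)^{−k/(σγ)}·(1 − σ²γη/((k+σγ)(k+ση)))^{1+k/(ση)} and C'₁ := kC₀/(ση). Let v : [0,T] × {−q̄,…,q̄} → ℝ take strictly negative values, be differentiable in t for each q, and define u(t,q) := (−v(t,q))^{−k/(ση)}. Then v satisfies ∂ₜv(t,q) + (γη²σ²/(2(γ+η)))·q²·v(t,q) − C₀·v(t,q)·[ 1_{q>−q̄}·(v(t,q)/v(t,q−1))^{k/(ση)} + 1_{q<q̄}·(v(t,q)/v(t,q+1))^{k/(ση)} ] = 0 for all t ∈ [0,T) and |q| ≤ q̄, with v(T,q) = −1, if and only if u satisfies the linear system ∂ₜu(t,q) = C₁·q²·u(t,q) − C'₁·( u(t,q+1)·1_{q<q̄} + u(t,q−1)·1_{q>−q̄} ) for all t ∈ [0,T) and |q| ≤ q̄, with u(T,q) = 1. -/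

import Mathlib

/-- linearization of the exchange's HJB system: `v` (strictly negative,
differentiable in time) solves the nonlinear system iff `u = (−v)^{−k/(ση)}` solves the
linear system `∂ₜu = C₁q²u − C'₁(u(q+1)1_{q<q̄} + u(q−1)1_{q>−q̄})` with `u(T,·) = 1`. -/
theorem statement5 (A k σ γ η c T : ℝ) (qbar : ℤ)
    (hA : 0 < A) (hk : 0 < k) (hσ : 0 < σ) (hγ : 0 < γ) (hη : 0 < η) (hc : 0 < c)
    (hqbar : 1 ≤ qbar) (hT : 0 < T)
    (v : ℝ → ℤ → ℝ)
    (hvneg : ∀ t : ℝ, ∀ q : ℤ, v t q < 0)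
    (hvdiff : ∀ q : ℤ, ∀ t : ℝ, DifferentiableAt ℝ (fun s => v s q) t) :
    letI C₀ : ℝ := A * (σ * η / k) * (1 + σ * γ / k) ^ (-(k / (σ * γ))) *
      (1 - σ ^ 2 * γ * η / ((k + σ * γ) * (k + σ * η))) ^ (1 + k / (σ * η))
    letI C₁ : ℝ := k * γ * η * σ / (2 * (γ + η))
    letI C₁' : ℝ := k * C₀ / (σ * η)
    letI u : ℝ → ℤ → ℝ := fun t q => (-(v t q)) ^ (-(k / (σ * η)))
    ((∀ t ∈ Set.Ico (0 : ℝ) T, ∀ q : ℤ, |q| ≤ qbar →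
        deriv (fun s => v s q) t
          + (γ * η ^ 2 * σ ^ 2 / (2 * (γ + η))) * (q : ℝ) ^ 2 * v t q
          - C₀ * v t q *
            ((if -qbar < q then (v t q / v t (q - 1)) ^ (k / (σ * η)) else 0)
              + (if q < qbar then (v t q / v t (q + 1)) ^ (k / (σ * η)) else 0)) = 0)
      ∧ (∀ q : ℤ, |q| ≤ qbar → v T q = -1))
    ↔
    ((∀ t ∈ Set.Ico (0 : ℝ) T, ∀ q : ℤ, |q| ≤ qbar →
        deriv (fun s => u s q) t
          = C₁ * (q : ℝ) ^ 2 * u t q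
            - C₁' * ((if q < qbar then u t (q + 1) else 0)
              + (if -qbar < q then u t (q - 1) else 0)))
      ∧ (∀ q : ℤ, |q| ≤ qbar → u T q = 1)) := by
  have hση : (0:ℝ) < σ * η := mul_pos hσ hη
  set α : ℝ := k / (σ * η) with hαdef
  have hα : 0 < α := div_pos hk hση
  have hw : ∀ t q, (0:ℝ) < -(v t q) := fun t q => neg_pos.mpr (hvneg t q)
  set C₀ : ℝ := A * (σ * η / k) * (1 + σ * γ / k) ^ (-(k / (σ * γ))) *
      (1 - σ ^ 2 * γ * η / ((k + σ * γ) * (k + σ * η))) ^ (1 + α) with hC₀def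
  beta_reduce
  -- derivative of u
  have hderiv : ∀ (q : ℤ) (t : ℝ), deriv (fun s => (-v s q) ^ (-α)) t
      = α * (-(v t q)) ^ (-α - 1) * deriv (fun s => v s q) t := by
    intro q t
    have h1 : HasDerivAt (fun s => v s q) (deriv (fun s => v s q) t) t :=
      (hvdiff q t).hasDerivAt
    have h2 : HasDerivAt (fun s => -(v s q)) (-(deriv (fun s => v s q) t)) t := h1.neg
    have h3 := h2.rpow_const (p := -α) (Or.inl (ne_of_gt (hw t q)))
    have h4 : deriv (fun s => (-(v s q)) ^ (-α)) t
        = -(deriv (fun s => v s q) t) * (-α) * (-(v t q)) ^ (-α - 1) := h3.deriv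
    rw [h4]; ring
  -- key identity
  have hukey : ∀ (t : ℝ) (q q' : ℤ),
      (-(v t q)) ^ (-α) * (v t q / v t q') ^ α = (-(v t q')) ^ (-α) := by
    intro t q q'
    have hq := hw t q; have hq' := hw t q'
    have hr : v t q / v t q' = (-(v t q)) / (-(v t q')) := (neg_div_neg_eq _ _).symm
    rw [hr, Real.div_rpow hq.le hq'.le, Real.rpow_neg hq.le, Real.rpow_neg hq'.le]
    have h1 : ((-(v t q)) ^ α) ≠ 0 := (Real.rpow_pos_of_pos hq α).ne'
    have h2 : ((-(v t q')) ^ α) ≠ 0 := (Real.rpow_pos_of_pos hq' α).ne'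
    field_simp
  have hpow1 : ∀ (t : ℝ) (q : ℤ), (-(v t q)) ^ (-α - 1) * (-(v t q)) = (-(v t q)) ^ (-α) := by
    intro t q
    rw [← Real.rpow_add_one (hw t q).ne' (-α - 1)]
    norm_num
  -- constants
  have hγη : (0:ℝ) < γ + η := add_pos hγ hη
  have hC₁ : k * γ * η * σ / (2 * (γ + η)) = α * (γ * η ^ 2 * σ ^ 2 / (2 * (γ + η))) := by
    rw [hαdef]; field_simp
  have hC₁' : k * C₀ / (σ * η) = α * C₀ := by
    rw [hαdef]; ring
  -- pointwise equivalence of the equations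
  have hmain : ∀ (t : ℝ) (q : ℤ),
      (deriv (fun s => v s q) t
          + (γ * η ^ 2 * σ ^ 2 / (2 * (γ + η))) * (q : ℝ) ^ 2 * v t q
          - C₀ * v t q *
            ((if -qbar < q then (v t q / v t (q - 1)) ^ α else 0)
              + (if q < qbar then (v t q / v t (q + 1)) ^ α else 0)) = 0)
      ↔ (deriv (fun s => (-v s q) ^ (-α)) t
          = k * γ * η * σ / (2 * (γ + η)) * (q : ℝ) ^ 2 * (-v t q) ^ (-α)
            - k * C₀ / (σ * η) * ((if q < qbar then (-v t (q + 1)) ^ (-α) else 0)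
              + (if -qbar < q then (-v t (q - 1)) ^ (-α) else 0))) := by
    intro t q
    have hwq := hw t q
    set P := deriv (fun s => v s q) t with hP
    set B : ℝ := γ * η ^ 2 * σ ^ 2 / (2 * (γ + η)) with hB
    set S : ℝ := (if -qbar < q then (v t q / v t (q - 1)) ^ α else 0)
              + (if q < qbar then (v t q / v t (q + 1)) ^ α else 0) with hSdef
    have hF : (0:ℝ) < α * (-(v t q)) ^ (-α - 1) :=
      mul_pos hα (Real.rpow_pos_of_pos hwq _)
    have hS : (-(v t q)) ^ (-α) * S
        = (if -qbar < q then (-(v t (q-1))) ^ (-α) else 0)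
          + (if q < qbar then (-(v t (q+1))) ^ (-α) else 0) := by
      rw [hSdef, mul_add]
      congr 1
      · split
        · exact hukey t q (q-1)
        · simp
      · split
        · exact hukey t q (q+1)
        · simp
    have hR : k * γ * η * σ / (2 * (γ + η)) * (q : ℝ) ^ 2 * (-v t q) ^ (-α)
            - k * C₀ / (σ * η) * ((if q < qbar then (-v t (q + 1)) ^ (-α) else 0)
              + (if -qbar < q then (-v t (q - 1)) ^ (-α) else 0))
        = α * (-(v t q)) ^ (-α - 1) * (-(B * (q : ℝ) ^ 2 * v t q) + C₀ * v t q * S) := by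
      have e1 : α * (-(v t q)) ^ (-α - 1) * (-(B * (q : ℝ) ^ 2 * v t q) + C₀ * v t q * S)
          = α * B * (q : ℝ) ^ 2 * ((-(v t q)) ^ (-α - 1) * (-(v t q)))
            - α * C₀ * (((-(v t q)) ^ (-α - 1) * (-(v t q))) * S) := by ring
      rw [e1, hpow1, hS, hC₁, hC₁']
      ring
    rw [hderiv q t, hR]
    constructor
    · intro h
      have : P = -(B * (q:ℝ)^2 * v t q) + C₀ * v t q * S := by linarith
      rw [← hP, this]
    · intro h
      have := mul_left_cancel₀ hF.ne' h
      linarith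
  constructor
  · rintro ⟨hpde, hterm⟩
    constructor
    · intro t ht q hq
      exact (hmain t q).mp (hpde t ht q hq)
    · intro q hq
      rw [hterm q hq]
      norm_num
  · rintro ⟨hpde, hterm⟩
    constructor
    · intro t ht q hq
      exact (hmain t q).mpr (hpde t ht q hq)
    · intro q hq
      have h : (-(v T q)) ^ (-α) = 1 := hterm q hq
      have h0 := congrArg Real.log h
      rw [Real.log_rpow (hw T q), Real.log_one] at h0
      have hlog : Real.log (-(v T q)) = 0 := by
        rcases mul_eq_zero.mp h0 with h' | h'
        · exact absurd h' (neg_ne_zero.mpr hα.ne')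
        · exact h'
      rcases Real.log_eq_zero.mp hlog with h' | h' | h'
      · exact absurd h' (hw T q).ne'
      · linarith
      · nlinarith [hw T q]
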